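/- Let M = ∑_{n≥0} m(n)·zⁿ ∈ ℚ⟦z⟧ be the ordinary generating function of peakless Motzkin paths. Then for every integer k ≥ 0, the ordinary generating function of peakless Motzkin paths from 0 to level k satisfies ∑_{n≥0} m(n,k)·zⁿ = z^k · M^{k+1} in ℚ⟦z⟧. -/

import Mathlib

/-- Steps of a Motzkin path: up, down, flat. -/
inductive Step : Type
  | U : Step
  | D : Step
  | F : Step
  deriving DecidableEq

instance instFintypeStep : Fintype Step :=
  ⟨⟨{Step.U, Step.D, Step.F}, by decide⟩, fun x => by cases x <;> decide⟩

/-- The value (vertical displacement) of a step. -/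
def Step.val : Step → ℤ
  | .U => 1
  | .D => -1
  | .F => 0

/-- The partial sum of the first `i` step values of the word `w`. -/
def psum {n : ℕ} (w : Fin n → Step) (i : ℕ) : ℤ :=
  ∑ j : Fin n, if (j : ℕ) < i then (w j).val else 0

/-- A word is peakless if no up-step is immediately followed by a down-step. -/
def Peakless {n : ℕ} (w : Fin n → Step) : Prop :=
  ∀ i : ℕ, ∀ h : i + 1 < n,
    ¬(w ⟨i, Nat.lt_of_succ_lt h⟩ = Step.U ∧ w ⟨i + 1, h⟩ = Step.D)

/-- `w` is a peakless Motzkin path from level `0` to level `k`: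
all partial sums are nonnegative, the total sum is `k`, and there is no peak. -/
def IsPeaklessMotzkinTo {n : ℕ} (w : Fin n → Step) (k : ℤ) : Prop :=
  (∀ i : ℕ, 0 ≤ psum w i) ∧ psum w n = k ∧ Peakless w

/-- The height of a path: the maximum of its partial sums (0 for the empty path). -/
def height {n : ℕ} (w : Fin n → Step) : ℤ :=
  (Finset.range (n + 1)).sup' Finset.nonempty_range_add_one (psum w)

/-- `mTo n k`: the number of peakless Motzkin paths of length `n` from level `0` to level `k`. -/
noncomputable def mTo (n : ℕ) (k : ℤ) : ℕ :=
  Nat.card {w : Fin n → Step // IsPeaklessMotzkinTo w k}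

/-- `m n`: the number of peakless Motzkin paths of length `n`. -/
noncomputable def m (n : ℕ) : ℕ := mTo n 0

/-- `A n ℓ`: the number of peakless Motzkin paths of length `n` of height at most `ℓ`. -/
noncomputable def A (n ℓ : ℕ) : ℕ :=
  Nat.card {w : Fin n → Step // IsPeaklessMotzkinTo w 0 ∧ height w ≤ (ℓ : ℤ)}

/-! ### Auxiliary development on lists -/

namespace PeaklessGFAux

/-- Sum of step values of a list. -/
def lval (l : List Step) : ℤ := (l.map Step.val).sum

@[simp] lemma lval_nil : lval [] = 0 := rfl
@[simp] lemma lval_cons (a : Step) (l : List Step) : lval (a :: l) = a.val + lval l := by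
  simp [lval]
@[simp] lemma lval_append (l₁ l₂ : List Step) : lval (l₁ ++ l₂) = lval l₁ + lval l₂ := by
  simp [lval]

lemma val_le_one (a : Step) : a.val ≤ 1 := by cases a <;> simp [Step.val]

/-- No-peak relation on adjacent steps. -/
def NoPeak (a b : Step) : Prop := ¬(a = Step.U ∧ b = Step.D)

/-- List version of `IsPeaklessMotzkinTo`. -/
def LPM (l : List Step) (k : ℤ) : Prop :=
  (∀ i : ℕ, 0 ≤ lval (l.take i)) ∧ lval l = k ∧ l.IsChain NoPeak

lemma lval_take_get (l : List Step) (i : ℕ) :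
    lval (l.take i) = ∑ j : Fin l.length, if (j : ℕ) < i then (l.get j).val else 0 := by
  induction l generalizing i with
  | nil => simp
  | cons a t ih =>
    cases i with
    | zero => simp
    | succ i =>
      rw [List.take_succ_cons, lval_cons, ih]
      simp [List.length_cons, Fin.sum_univ_succ, Nat.succ_lt_succ_iff]

lemma psum_eq {n : ℕ} (w : Fin n → Step) (i : ℕ) :
    psum w i = lval ((List.ofFn w).take i) := by
  rw [lval_take_get, psum]
  refine Fintype.sum_equiv (finCongr (List.length_ofFn (f := w)).symm) _ _ ?_
  intro j
  simp [List.get_ofFn]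

lemma peakless_iff {n : ℕ} (w : Fin n → Step) :
    Peakless w ↔ (List.ofFn w).IsChain NoPeak := by
  rw [List.isChain_iff_getElem]
  constructor
  · intro h i hi
    have hi' : i + 1 < n := by
      have := (List.length_ofFn (f := w)); omega
    have := h i hi'
    simpa [NoPeak, List.get_ofFn] using this
  · intro h i hi
    have hi' : i + 1 < (List.ofFn w).length := by
      have := (List.length_ofFn (f := w)); omega
    have := h i hi'
    simpa [NoPeak, List.get_ofFn] using this

lemma isPM_iff {n : ℕ} (w : Fin n → Step) (k : ℤ) :
    IsPeaklessMotzkinTo w k ↔ LPM (List.ofFn w) k := by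
  have htake : (List.ofFn w).take n = List.ofFn w := by
    apply List.take_of_length_le; simp
  constructor
  · rintro ⟨h1, h2, h3⟩
    exact ⟨fun i => by simpa [psum_eq] using h1 i,
      by rw [← htake, ← psum_eq]; exact h2, (peakless_iff w).1 h3⟩
  · rintro ⟨h1, h2, h3⟩
    exact ⟨fun i => by rw [psum_eq]; exact h1 i,
      by rw [psum_eq, htake]; exact h2, (peakless_iff w).2 h3⟩

/-- Words of length `n` correspond to lists of length `n`. -/
def toListEquiv (n : ℕ) (k : ℤ) :
    {w : Fin n → Step // IsPeaklessMotzkinTo w k} ≃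
      {l : List Step // l.length = n ∧ LPM l k} where
  toFun w := ⟨List.ofFn w.1, List.length_ofFn, (isPM_iff _ _).1 w.2⟩
  invFun l := ⟨fun j => l.1.get (Fin.cast l.2.1.symm j), by
    rw [isPM_iff]
    have : List.ofFn (fun j : Fin n => l.1.get (Fin.cast l.2.1.symm j)) = l.1 := by
      rcases l with ⟨l, hl, hlp⟩
      subst hl
      simpa using List.ofFn_get l
    rw [this]
    exact l.2.2⟩
  left_inv w := by
    ext j
    simp [List.get_ofFn]
  right_inv l := by
    apply Subtype.ext
    rcases l with ⟨l, hl, hlp⟩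
    subst hl
    simpa using List.ofFn_get l

/-! ### Concatenation lemmas -/

lemma take_join_right (u v : List Step) (j : ℕ) :
    (u ++ Step.U :: v).take (u.length + 1 + j) = u ++ Step.U :: v.take j := by
  rw [add_assoc, List.take_length_add_append]
  rw [Nat.add_comm 1 j, List.take_succ_cons]

lemma lval_nonneg_of_LPM {u : List Step} {k : ℤ} (hu : LPM u k) : 0 ≤ k := by
  have := hu.1 u.length
  rwa [List.take_length, hu.2.1] at this

lemma LPM_join {u v : List Step} {k : ℤ} (hu : LPM u k) (hv : LPM v 0) :
    LPM (u ++ Step.U :: v) (k + 1) := by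
  have hk : 0 ≤ k := lval_nonneg_of_LPM hu
  refine ⟨?_, ?_, ?_⟩
  · intro i
    rcases le_or_gt i u.length with h | h
    · rw [List.take_append_of_le_length h]
      have := hu.1 i
      exact this
    · obtain ⟨j, rfl⟩ : ∃ j, i = u.length + 1 + j := ⟨i - (u.length + 1), by omega⟩
      rw [take_join_right]
      have h1 := hv.1 j
      have h2 := hu.2.1
      simp only [lval_append, lval_cons]
      simp [Step.val] at *
      omega
  · simp [hu.2.1, hv.2.1, Step.val]
  · rw [List.isChain_append]
    refine ⟨hu.2.2, ?_, ?_⟩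
    · rw [List.isChain_cons]
      refine ⟨?_, hv.2.2⟩
      intro y hy
      rintro ⟨-, rfl⟩
      cases v with
      | nil => simp at hy
      | cons a t =>
        simp at hy
        subst hy
        have := hv.1 1
        simp [Step.val] at this
    · intro x hx y hy
      simp at hy
      subst hy
      rintro ⟨-, h⟩
      exact Step.noConfusion h

/-! ### Splitting -/

variable {k : ℤ} {l : List Step}

/-- The last index `i` with `lval (l.take i) ≤ k`. -/
noncomputable def splitIdx (l : List Step) (k : ℤ) : ℕ :=
  Nat.findGreatest (fun i => lval (l.take i) ≤ k) l.length

section Split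

variable (hk : 0 ≤ k) (hl : LPM l (k + 1))

include hk hl

lemma splitIdx_le : lval (l.take (splitIdx l k)) ≤ k :=
  Nat.findGreatest_spec (P := fun i => lval (l.take i) ≤ k) (Nat.zero_le _) (by simpa using hk)

lemma splitIdx_max {i : ℕ} (h1 : splitIdx l k < i) (h2 : i ≤ l.length) :
    k < lval (l.take i) := by
  have := Nat.findGreatest_is_greatest (P := fun i => lval (l.take i) ≤ k) h1 h2
  omega

lemma splitIdx_lt : splitIdx l k < l.length := by
  rcases Nat.lt_or_ge (splitIdx l k) l.length with h | h
  · exact h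
  · exfalso
    have hle : splitIdx l k ≤ l.length := Nat.findGreatest_le _
    have heq : splitIdx l k = l.length := le_antisymm hle h
    have := splitIdx_le hk hl
    rw [heq, List.take_length, hl.2.1] at this
    omega

lemma splitIdx_eq_k : lval (l.take (splitIdx l k)) = k := by
  have hlt := splitIdx_lt hk hl
  have h1 := splitIdx_le hk hl
  have h2 : k < lval (l.take (splitIdx l k + 1)) :=
    splitIdx_max hk hl (Nat.lt_succ_self _) hlt
  have h3 : l.take (splitIdx l k + 1) = l.take (splitIdx l k) ++ [l.get ⟨_, hlt⟩] := by
    rw [List.take_succ]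
    congr 1
    rw [List.getElem?_eq_getElem hlt]
    rfl
  rw [h3] at h2
  simp only [lval_append, lval_cons, lval_nil] at h2
  have := val_le_one (l.get ⟨_, hlt⟩)
  omega

lemma splitIdx_get_U : l.get ⟨splitIdx l k, splitIdx_lt hk hl⟩ = Step.U := by
  have hlt := splitIdx_lt hk hl
  have h1 := splitIdx_eq_k hk hl
  have h2 : k < lval (l.take (splitIdx l k + 1)) :=
    splitIdx_max hk hl (Nat.lt_succ_self _) hlt
  have h3 : l.take (splitIdx l k + 1) = l.take (splitIdx l k) ++ [l.get ⟨_, hlt⟩] := by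
    rw [List.take_succ]
    congr 1
    rw [List.getElem?_eq_getElem hlt]
    rfl
  rw [h3] at h2
  simp only [lval_append, lval_cons, lval_nil, h1] at h2
  cases h : l.get ⟨splitIdx l k, hlt⟩ with
  | U => rfl
  | D => rw [h] at h2; simp only [Step.val] at h2; omega
  | F => rw [h] at h2; simp only [Step.val] at h2; omega

lemma split_decomp :
    l = l.take (splitIdx l k) ++ Step.U :: l.drop (splitIdx l k + 1) := by
  have hlt := splitIdx_lt hk hl
  conv_lhs => rw [← List.take_append_drop (splitIdx l k) l]
  congr 1
  rw [List.drop_eq_getElem_cons hlt]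
  congr 1
  have := splitIdx_get_U hk hl
  simpa [List.get_eq_getElem] using this

lemma split_left_LPM : LPM (l.take (splitIdx l k)) k := by
  refine ⟨?_, ?_, ?_⟩
  · intro i
    rw [List.take_take]
    exact hl.1 _
  · exact splitIdx_eq_k hk hl
  · have hd := split_decomp hk hl
    have := hl.2.2
    rw [hd, List.isChain_append] at this
    exact this.1

lemma split_right_LPM : LPM (l.drop (splitIdx l k + 1)) 0 := by
  set j := splitIdx l k with hj
  set u := l.take j with hu
  set v := l.drop (j + 1) with hv
  have hd : l = u ++ Step.U :: v := split_decomp hk hl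
  have hulen : u.length = j := by
    rw [hu, List.length_take]
    exact Nat.min_eq_left (le_of_lt (splitIdx_lt hk hl))
  have huval : lval u = k := splitIdx_eq_k hk hl
  refine ⟨?_, ?_, ?_⟩
  · intro i
    set i' := min i v.length with hi'
    have htv : v.take i = v.take i' := by
      rcases le_total i v.length with h | h
      · rw [hi', Nat.min_eq_left h]
      · rw [hi', Nat.min_eq_right h, List.take_of_length_le h, List.take_length]
    have hlen : j + 1 + i' ≤ l.length := by
      have : l.length = u.length + 1 + v.length := by rw [hd]; simp; omega
      omega
    have hgt : k < lval (l.take (j + 1 + i')) := splitIdx_max hk hl (by omega) hlen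
    have htake : l.take (j + 1 + i') = u ++ Step.U :: v.take i' := by
      conv_lhs => rw [hd]
      rw [← hulen, take_join_right]
    rw [htake] at hgt
    simp [huval, Step.val] at hgt
    rw [htv]
    omega
  · have := hl.2.1
    rw [hd] at this
    simp [huval, Step.val] at this
    omega
  · have := hl.2.2
    rw [hd, List.isChain_append] at this
    exact (List.isChain_cons.mp this.2.1).2

end Split

/-- Uniqueness of the split point. -/
lemma splitIdx_join {u v : List Step} {k : ℤ} (hu : LPM u k) (hv : LPM v 0) :
    splitIdx (u ++ Step.U :: v) k = u.length := by
  rw [splitIdx, Nat.findGreatest_eq_iff]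
  refine ⟨by simp only [List.length_append, List.length_cons]; omega, ?_, ?_⟩
  · intro _
    rw [List.take_append_of_le_length (le_refl _), List.take_length, hu.2.1]
  · intro i hi hile
    obtain ⟨j, rfl⟩ : ∃ j, i = u.length + 1 + j := ⟨i - (u.length + 1), by omega⟩
    rw [take_join_right]
    have h1 := hv.1 j
    simp [hu.2.1, Step.val]
    omega

/-- The pairs type for the convolution. -/
def Pairs (n : ℕ) (k : ℤ) : Type :=
  {x : List Step × List Step //
    (x.1.length + x.2.length = n ∧ LPM x.1 k) ∧ LPM x.2 0}

/-- The main decomposition equivalence. -/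
noncomputable def joinEquiv (n : ℕ) (k : ℤ) (hk : 0 ≤ k) :
    Pairs n k ≃ {l : List Step // l.length = n + 1 ∧ LPM l (k + 1)} where
  toFun x := ⟨x.1.1 ++ Step.U :: x.1.2, by
    refine ⟨?_, LPM_join x.2.1.2 x.2.2⟩
    have := x.2.1.1
    simp; omega⟩
  invFun l := ⟨(l.1.take (splitIdx l.1 k), l.1.drop (splitIdx l.1 k + 1)), by
    have hl := l.2.2
    have hlt := splitIdx_lt hk hl
    refine ⟨⟨?_, split_left_LPM hk hl⟩, split_right_LPM hk hl⟩
    have hlen := l.2.1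
    simp [List.length_take, List.length_drop]
    omega⟩
  left_inv x := by
    rcases x with ⟨⟨u, v⟩, ⟨hlen, hu⟩, hv⟩
    have hj : splitIdx (u ++ Step.U :: v) k = u.length := splitIdx_join hu hv
    apply Subtype.ext
    simp only [hj]
    refine Prod.ext ?_ ?_
    · simpa using List.take_left u (Step.U :: v)
    · have : u.length + 1 = u.length + 1 := rfl
      simpa using List.drop_append (l₁ := u) (l₂ := Step.U :: v) 1
  right_inv l := by
    apply Subtype.ext
    exact (split_decomp hk l.2.2).symm

/-- Fibered version. -/
abbrev pairsFiber (p : ℕ × ℕ) (k : ℤ) : Type :=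
  {x : List Step × List Step //
    (x.1.length = p.1 ∧ LPM x.1 k) ∧ (x.2.length = p.2 ∧ LPM x.2 0)}

def pairsSigmaEquiv (n : ℕ) (k : ℤ) :
    Pairs n k ≃ Σ p : ↥(Finset.HasAntidiagonal.antidiagonal n), pairsFiber p.1 k where
  toFun x := ⟨⟨(x.1.1.length, x.1.2.length), by
      simp [Finset.HasAntidiagonal.mem_antidiagonal]; exact x.2.1.1⟩,
    ⟨x.1, ⟨rfl, x.2.1.2⟩, rfl, x.2.2⟩⟩
  invFun y := ⟨y.2.1, ⟨by
      have h1 := y.2.2.1.1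
      have h2 := y.2.2.2.1
      have h3 := y.1.2
      rw [Finset.HasAntidiagonal.mem_antidiagonal] at h3
      rw [h1, h2]
      exact h3, y.2.2.1.2⟩, y.2.2.2.2⟩
  left_inv x := rfl
  right_inv y := by
    rcases y with ⟨⟨⟨a, b⟩, hp⟩, ⟨⟨u, v⟩, ⟨h1, h2⟩, h3, h4⟩⟩
    dsimp at h1 h3
    subst h1
    subst h3
    rfl

def fiberProdEquiv (p : ℕ × ℕ) (k : ℤ) :
    pairsFiber p k ≃
      {u : List Step // u.length = p.1 ∧ LPM u k} ×
      {v : List Step // v.length = p.2 ∧ LPM v 0} :=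
  Equiv.subtypeProdEquivProd (p := fun u => u.length = p.1 ∧ LPM u k)
    (q := fun v => v.length = p.2 ∧ LPM v 0)

lemma nat_card_sigma {ι : Type*} [Fintype ι] (F : ι → Type*) [∀ i, Finite (F i)] :
    Nat.card (Σ i, F i) = ∑ i, Nat.card (F i) := by
  letI : ∀ i, Fintype (F i) := fun i => Fintype.ofFinite _
  simp [Nat.card_eq_fintype_card, Fintype.card_sigma]

lemma card_list_subtype (n : ℕ) (k : ℤ) :
    Nat.card {l : List Step // l.length = n ∧ LPM l k} = mTo n k :=
  (Nat.card_congr (toListEquiv n k)).symm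

instance finite_list_subtype (n : ℕ) (k : ℤ) :
    Finite {l : List Step // l.length = n ∧ LPM l k} :=
  Finite.of_equiv _ (toListEquiv n k)

/-- The key convolution identity. -/
lemma mTo_succ (n : ℕ) (k : ℕ) :
    mTo (n + 1) ((k : ℤ) + 1) = ∑ p ∈ Finset.HasAntidiagonal.antidiagonal n, mTo p.1 k * m p.2 := by
  have hk : (0 : ℤ) ≤ (k : ℤ) := Int.ofNat_nonneg k
  have e1 : mTo (n + 1) ((k : ℤ) + 1) =
      Nat.card {l : List Step // l.length = n + 1 ∧ LPM l ((k : ℤ) + 1)} :=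
    (card_list_subtype _ _).symm
  rw [e1, ← Nat.card_congr (joinEquiv n k hk), Nat.card_congr (pairsSigmaEquiv n k)]
  haveI : ∀ p : ↥(Finset.HasAntidiagonal.antidiagonal n), Finite (pairsFiber p.1 k) := fun p =>
    Finite.of_equiv _ (fiberProdEquiv p.1 k).symm
  rw [nat_card_sigma]
  rw [← Finset.sum_coe_sort (Finset.HasAntidiagonal.antidiagonal n) (fun p => mTo p.1 k * m p.2)]
  apply Finset.sum_congr rfl
  intro p _
  rw [Nat.card_congr (fiberProdEquiv p.1 k), Nat.card_prod,
    card_list_subtype, card_list_subtype]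
  rfl

lemma mTo_zero_succ (k : ℕ) : mTo 0 ((k : ℤ) + 1) = 0 := by
  rw [mTo]
  haveI : IsEmpty {w : Fin 0 → Step // IsPeaklessMotzkinTo w ((k : ℤ) + 1)} := by
    constructor
    rintro ⟨w, h1, h2, h3⟩
    rw [psum] at h2
    simp at h2
    omega
  exact Nat.card_of_isEmpty

end PeaklessGFAux

open PeaklessGFAux in
/-- For every `k ≥ 0`, the generating function of peakless Motzkin paths ending at level
`k` satisfies `∑ m(n,k) zⁿ = z^k · M^{k+1}` in `ℚ⟦z⟧`, where `M = ∑ m(n) zⁿ`. -/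
theorem peakless_to_level_gf_eq (k : ℕ) :
    (PowerSeries.mk fun n => (mTo n (k : ℤ) : ℚ))
      = PowerSeries.X ^ k * (PowerSeries.mk fun n => (m n : ℚ)) ^ (k + 1) := by
  induction k with
  | zero => simp [m]
  | succ k ih =>
    have step : (PowerSeries.mk fun n => (mTo n ((k + 1 : ℕ) : ℤ) : ℚ))
        = PowerSeries.X * ((PowerSeries.mk fun n => (mTo n (k : ℤ) : ℚ))
            * (PowerSeries.mk fun n => (m n : ℚ))) := by
      ext n
      cases n with
      | zero =>
        rw [PowerSeries.coeff_zero_eq_constantCoeff]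
        simp only [map_mul]
        rw [PowerSeries.constantCoeff_X]
        simp [PowerSeries.coeff_mk]
        push_cast
        exact_mod_cast mTo_zero_succ k
      | succ n =>
        rw [PowerSeries.coeff_succ_X_mul, PowerSeries.coeff_mul, PowerSeries.coeff_mk]
        rw [show ((k + 1 : ℕ) : ℤ) = (k : ℤ) + 1 by push_cast; ring]
        rw [mTo_succ n k]
        push_cast
        apply Finset.sum_congr rfl
        intro p _
        rw [PowerSeries.coeff_mk, PowerSeries.coeff_mk]
    rw [step, ih]
    ring
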